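/- The discrete Liouville invariant F_0 = (t_2/(t_1-1) + 1)((t-1)/t_1 + 1) is annihilated by both characteristic vector fields: X_1 F_0 = 0 and X_{-1} F_0 = 0. -/

import Mathlib

/-- The invariant of the discrete Liouville equation. -/
noncomputable def F0 (t t1 t2 : ℝ) : ℝ := (t2 / (t1 - 1) + 1) * ((t - 1) / t1 + 1)

lemma derivT (t t1 t2 : ℝ) (ht10 : t1 ≠ 0) (ht1 : t1 ≠ 1) :
    deriv (fun s => F0 s t1 t2) t = (t2 / (t1 - 1) + 1) * (1 / t1) := by
  unfold F0
  have h : HasDerivAt (fun s : ℝ => (t2 / (t1 - 1) + 1) * ((s - 1) / t1 + 1))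
      ((t2 / (t1 - 1) + 1) * (1 / t1)) t := by
    have := (((hasDerivAt_id t).sub_const 1).div_const t1).add_const 1
    simpa using this.const_mul (t2 / (t1 - 1) + 1)
  exact h.deriv

lemma derivT1 (t t1 t2 : ℝ) (ht10 : t1 ≠ 0) (ht1 : t1 ≠ 1) :
    deriv (fun s => F0 t s t2) t1 =
      (-t2 / (t1 - 1) ^ 2) * ((t - 1) / t1 + 1)
        + (t2 / (t1 - 1) + 1) * (-(t - 1) / t1 ^ 2) := by
  unfold F0
  have hne : t1 - 1 ≠ 0 := sub_ne_zero.mpr ht1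
  have h1 : HasDerivAt (fun s : ℝ => t2 / (s - 1) + 1) (-t2 / (t1 - 1) ^ 2) t1 := by
    have hinv := (((hasDerivAt_id t1).sub_const 1).inv hne).const_mul t2
    have h' := hinv.add_const 1
    convert h' using 1
    · rfl
    · rfl
    · funext s; simp [div_eq_mul_inv]
    · simp [div_eq_mul_inv]
  have h2 : HasDerivAt (fun s : ℝ => (t - 1) / s + 1) (-(t - 1) / t1 ^ 2) t1 := by
    have hinv := ((hasDerivAt_id t1).inv ht10).const_mul (t - 1)
    have h' := hinv.add_const 1
    convert h' using 1
    · rfl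
    · rfl
    · funext s; simp [div_eq_mul_inv]
    · simp [div_eq_mul_inv]; ring
  exact (h1.mul h2).deriv

lemma derivT2 (t t1 t2 : ℝ) :
    deriv (fun s => F0 t t1 s) t2 = (1 / (t1 - 1)) * ((t - 1) / t1 + 1) := by
  unfold F0
  have h : HasDerivAt (fun s : ℝ => (s / (t1 - 1) + 1) * ((t - 1) / t1 + 1))
      ((1 / (t1 - 1)) * ((t - 1) / t1 + 1)) t2 := by
    have := ((hasDerivAt_id t2).div_const (t1 - 1)).add_const 1
    simpa using this.mul_const ((t - 1) / t1 + 1)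
  exact h.deriv

theorem stmt15 (t t1 t2 : ℝ) (ht0 : t ≠ 0) (ht : t ≠ 1) (ht10 : t1 ≠ 0) (ht1 : t1 ≠ 1) :
    (deriv (fun s => F0 s t1 t2) t
      + t1 / (t - 1) * deriv (fun s => F0 t s t2) t1
      + t1 * t2 / ((t - 1) * (t1 - 1)) * deriv (fun s => F0 t t1 s) t2 = 0) ∧
    (deriv (fun s => F0 s t1 t2) t
      + (t1 - 1) / t * deriv (fun s => F0 t s t2) t1
      + (t1 - 1) * (t2 - 1) / (t * t1) * deriv (fun s => F0 t t1 s) t2 = 0) := by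
  have ht1' : t1 - 1 ≠ 0 := sub_ne_zero.mpr ht1
  have ht' : t - 1 ≠ 0 := sub_ne_zero.mpr ht
  rw [derivT t t1 t2 ht10 ht1, derivT1 t t1 t2 ht10 ht1, derivT2 t t1 t2]
  constructor <;> (field_simp; ring)
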